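/- Let P be a finite set of weighted points in the plane with positive weights, and suppose a point c minimizes the maximum weighted distance max_{p ∈ P} d(p,c)/w(p). Then there exists a subset S ⊆ P with |S| ≤ 3 such that c also minimizes max_{p ∈ S} d(p,c)/w(p) and the minimum values over S and over P are equal. -/

import Mathlib

abbrev Pt := EuclideanSpace ℝ (Fin 2)

open Finset

lemma sup_helper {α : Type*} (S : Finset α) (hS : S.Nonempty) (f : α → ℝ)
    (hf : ∀ p ∈ S, 0 ≤ f p) :
    (⨆ p ∈ (S : Set α), f p) = S.sup' hS f := by
  obtain ⟨a, ha⟩ := hS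
  have h0 : (0:ℝ) ≤ S.sup' ⟨a, ha⟩ f := le_trans (hf a ha) (le_sup' f ha)
  apply le_antisymm
  · exact Real.iSup_le (fun p => Real.iSup_le (fun hp => le_sup' f hp) h0) h0
  · apply Finset.sup'_le
    intro p hp
    have hb : BddAbove (Set.range fun p => ⨆ _ : p ∈ (S : Set α), f p) := by
      refine ⟨S.sup' ⟨a, ha⟩ f, ?_⟩
      rintro x ⟨q, rfl⟩
      exact Real.iSup_le (fun hq => le_sup' f hq) h0
    have he : (⨆ _ : p ∈ (S : Set α), f p) = f p :=
      ciSup_pos (f := fun _ => f p) hp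
    rw [← he]
    exact le_ciSup hb p

lemma exists_obtuse {S : Finset Pt} {c : Pt} (hc : c ∈ convexHull ℝ (S : Set Pt)) (x : Pt) :
    ∃ p ∈ S, inner ℝ (p - c) (x - c) ≤ (0:ℝ) := by
  rw [Finset.convexHull_eq] at hc
  obtain ⟨lam, hlam0, hlam1, hcm⟩ := hc
  by_contra h
  push_neg at h
  have hc' : ∑ p ∈ S, lam p • p = c := by
    have := hcm
    rwa [Finset.centerMass, hlam1, inv_one, one_smul] at this
  have hsum : ∑ p ∈ S, lam p • (p - c) = 0 := by
    simp only [smul_sub]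
    rw [Finset.sum_sub_distrib, hc', ← Finset.sum_smul, hlam1, one_smul, sub_self]
  have hzero : ∑ p ∈ S, lam p * inner ℝ (p - c) (x - c) = 0 := by
    have : ∑ p ∈ S, lam p * inner ℝ (p - c) (x - c)
        = inner ℝ (∑ p ∈ S, lam p • (p - c)) (x - c) := by
      rw [sum_inner]
      exact Finset.sum_congr rfl fun p hp => (real_inner_smul_left _ _ _).symm
    rw [this, hsum, inner_zero_left]
  have hpos : ∃ p ∈ S, 0 < lam p := by
    by_contra hn
    push_neg at hn
    have : ∑ p ∈ S, lam p ≤ 0 := Finset.sum_nonpos hn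
    linarith
  obtain ⟨p0, hp0, hl0⟩ := hpos
  have : 0 < ∑ p ∈ S, lam p * inner ℝ (p - c) (x - c) := by
    apply Finset.sum_pos'
    · exact fun p hp => mul_nonneg (hlam0 p hp) (le_of_lt (h p hp))
    · exact ⟨p0, hp0, mul_pos hl0 (h p0 hp0)⟩
  linarith

lemma dist_le_of_obtuse {p c x : Pt} (h : inner ℝ (p - c) (x - c) ≤ (0:ℝ)) :
    dist p c ≤ dist p x := by
  have h1 : dist p c ^ 2 ≤ dist p x ^ 2 := by
    rw [dist_eq_norm, dist_eq_norm]
    have he : p - x = (p - c) - (x - c) := by abel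
    rw [he, norm_sub_sq_real (p - c) (x - c)]
    nlinarith [sq_nonneg ‖x - c‖]
  exact le_of_pow_le_pow_left₀ two_ne_zero dist_nonneg h1

theorem stmt_3 (P : Finset Pt) (hP : P.Nonempty) (w : Pt → ℝ)
    (hw : ∀ p ∈ P, 0 < w p) (c : Pt)
    (hc : ∀ x : Pt, (⨆ p ∈ (P : Set Pt), dist p c / w p) ≤ ⨆ p ∈ (P : Set Pt), dist p x / w p) :
    ∃ S : Finset Pt, S ⊆ P ∧ S.card ≤ 3 ∧
      (∀ x : Pt, (⨆ p ∈ (S : Set Pt), dist p c / w p) ≤ ⨆ p ∈ (S : Set Pt), dist p x / w p) ∧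
      (⨆ p ∈ (S : Set Pt), dist p c / w p) = ⨆ p ∈ (P : Set Pt), dist p c / w p := by
  classical
  have hsupP : ∀ x : Pt, (⨆ p ∈ (P : Set Pt), dist p x / w p)
      = P.sup' hP (fun p => dist p x / w p) :=
    fun x => sup_helper P hP _ (fun p hp => div_nonneg dist_nonneg (hw p hp).le)
  set r : ℝ := P.sup' hP (fun p => dist p c / w p) with hr
  set F : Finset Pt := P.filter (fun p => dist p c / w p = r) with hFdef
  have hFP : F ⊆ P := Finset.filter_subset _ _
  have hFval : ∀ p ∈ F, dist p c / w p = r := fun p hp => (Finset.mem_filter.mp hp).2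
  have hFne : F.Nonempty := by
    obtain ⟨p, hp, hpe⟩ := Finset.exists_mem_eq_sup' hP (fun p => dist p c / w p)
    exact ⟨p, Finset.mem_filter.mpr ⟨hp, hpe.symm⟩⟩
  -- c lies in the convex hull of the farthest points F
  have hconv : c ∈ convexHull ℝ (F : Set Pt) := by
    by_contra hno
    obtain ⟨f, u, hfc, hfF⟩ := geometric_hahn_banach_point_closed
      (convex_convexHull ℝ (F : Set Pt)) ((F : Set Pt).toFinite.isClosed_convexHull (𝕜 := ℝ)) hno
    set v : Pt := (InnerProductSpace.toDual ℝ Pt).symm f with hv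
    have hfv : ∀ y : Pt, inner ℝ v y = f y := fun y => InnerProductSpace.toDual_symm_apply
    set δ : ℝ := u - inner ℝ v c with hδ
    have hδpos : 0 < δ := by
      have := hfc
      rw [← hfv c] at this
      simp only [hδ]; linarith
    have hFsep : ∀ p ∈ F, δ ≤ (inner ℝ v (p - c) : ℝ) := by
      intro p hp
      have h1 : u < inner ℝ v p := by
        rw [hfv]; exact hfF p (subset_convexHull ℝ _ hp)
      rw [inner_sub_right]
      simp only [hδ]; linarith
    have hvne : v ≠ 0 := by
      obtain ⟨p, hp⟩ := hFne
      intro h0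
      have := hFsep p hp
      rw [h0, inner_zero_left] at this
      linarith
    have hvpos : 0 < ‖v‖ := norm_pos_iff.mpr hvne
    set b : Pt → ℝ := fun p => if p ∈ F then δ / ‖v‖ ^ 2
      else (w p * (r - dist p c / w p)) / (2 * ‖v‖) with hb
    have hbpos : ∀ p ∈ P, 0 < b p := by
      intro p hp
      simp only [hb]
      split_ifs with hpF
      · positivity
      · have hle : dist p c / w p ≤ r := by
          rw [hr]; exact Finset.le_sup' (fun q => dist q c / w q) hp
        have hne : dist p c / w p ≠ r := fun h => hpF (Finset.mem_filter.mpr ⟨hp, h⟩)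
        have hgap : dist p c / w p < r := lt_of_le_of_ne hle hne
        exact div_pos (mul_pos (hw p hp) (sub_pos.mpr hgap)) (by positivity)
    set ε : ℝ := P.inf' hP b with hε
    have hεpos : 0 < ε := (Finset.lt_inf'_iff hP).mpr hbpos
    have hεle : ∀ p ∈ P, ε ≤ b p := fun p hp => Finset.inf'_le _ hp
    set x : Pt := c + ε • v with hx
    have hlt : ∀ p ∈ P, dist p x / w p < r := by
      intro p hp
      by_cases hpF : p ∈ F
      · -- farthest point: distance strictly decreases
        have hεb : ε ≤ δ / ‖v‖ ^ 2 := by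
          have h' := hεle p hp
          have hbp : b p = δ / ‖v‖ ^ 2 := by simp [hb, hpF]
          rwa [hbp] at h'
        have hsep := hFsep p hpF
        have hd2 : dist p x ^ 2 < dist p c ^ 2 := by
          have hexp : dist p x ^ 2
              = dist p c ^ 2 - 2 * ε * inner ℝ v (p - c) + ε ^ 2 * ‖v‖ ^ 2 := by
            rw [dist_eq_norm, dist_eq_norm]
            have he : p - x = (p - c) - ε • v := by rw [hx]; abel
            rw [he, norm_sub_sq_real (p - c) (ε • v)]
            rw [real_inner_smul_right, norm_smul, Real.norm_eq_abs,
              abs_of_pos hεpos, mul_pow, real_inner_comm]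
            ring
          have h1 : ε ^ 2 * ‖v‖ ^ 2 ≤ ε * δ := by
            have : ε * ‖v‖ ^ 2 ≤ δ := by
              rw [← le_div_iff₀ (by positivity)]; exact hεb
            calc ε ^ 2 * ‖v‖ ^ 2 = ε * (ε * ‖v‖ ^ 2) := by ring
              _ ≤ ε * δ := by nlinarith
          have h2 : ε * δ ≤ ε * inner ℝ v (p - c) := by nlinarith
          rw [hexp]; nlinarith
        have hdlt : dist p x < dist p c :=
          lt_of_pow_lt_pow_left₀ 2 dist_nonneg hd2
        calc dist p x / w p < dist p c / w p := (div_lt_div_iff_of_pos_right (hw p hp)).mpr hdlt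
          _ = r := hFval p hpF
      · -- non-farthest point: still below r for small ε
        have hεb : ε ≤ (w p * (r - dist p c / w p)) / (2 * ‖v‖) := by
          have h' := hεle p hp
          have hbp : b p = w p * (r - dist p c / w p) / (2 * ‖v‖) := by simp [hb, hpF]
          rwa [hbp] at h'
        have hle : dist p c / w p ≤ r := by
          rw [hr]; exact Finset.le_sup' (fun q => dist q c / w q) hp
        have hne : dist p c / w p ≠ r := fun h => hpF (Finset.mem_filter.mpr ⟨hp, h⟩)
        have hgap : dist p c / w p < r := lt_of_le_of_ne hle hne
        have hwp := hw p hp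
        have htri : dist p x ≤ dist p c + ε * ‖v‖ := by
          calc dist p x ≤ dist p c + dist c x := dist_triangle _ _ _
            _ = dist p c + ε * ‖v‖ := by
                rw [hx, dist_eq_norm]
                simp [norm_smul, Real.norm_eq_abs, abs_of_pos hεpos]
        have hεv : ε * ‖v‖ ≤ w p * (r - dist p c / w p) / 2 := by
          rw [le_div_iff₀ (by norm_num : (0:ℝ) < 2)]
          rw [le_div_iff₀ (by positivity : (0:ℝ) < 2 * ‖v‖)] at hεb
          nlinarith
        have hdc : dist p c = w p * (dist p c / w p) := by
          field_simp
        rw [div_lt_iff₀ hwp]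
        nlinarith
    have hfinal : P.sup' hP (fun p => dist p x / w p) < r := (Finset.sup'_lt_iff hP).mpr hlt
    have := hc x
    rw [hsupP c, hsupP x, ← hr] at this
    linarith
  -- Carathéodory
  rw [convexHull_eq_union] at hconv
  simp only [Set.mem_iUnion, exists_prop] at hconv
  obtain ⟨t, htF, hai, htc⟩ := hconv
  have htFfin : t ⊆ F := fun p hp => htF hp
  have htP : t ⊆ P := fun p hp => hFP (htFfin hp)
  have htne : t.Nonempty := by
    rcases t.eq_empty_or_nonempty with h | h
    · rw [h] at htc; simp at htc
    · exact h
  have hcard : t.card ≤ 3 := by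
    have h1 := hai.card_le_finrank_succ (k := ℝ)
    have h2 : Module.finrank ℝ (vectorSpan ℝ (Set.range ((↑) : t → Pt))) ≤ 2 := by
      have := Submodule.finrank_le (vectorSpan ℝ (Set.range ((↑) : t → Pt)))
      rwa [finrank_euclideanSpace_fin] at this
    rw [Fintype.card_coe] at h1
    omega
  have hnn : ∀ p ∈ t, 0 ≤ dist p c / w p ∧ ∀ y : Pt, 0 ≤ dist p y / w p := by
    intro p hp
    exact ⟨div_nonneg dist_nonneg (hw p (htP hp)).le,
      fun y => div_nonneg dist_nonneg (hw p (htP hp)).le⟩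
  have hsupS : ∀ y : Pt, (⨆ p ∈ (t : Set Pt), dist p y / w p)
      = t.sup' htne (fun p => dist p y / w p) :=
    fun y => sup_helper t htne _ (fun p hp => div_nonneg dist_nonneg (hw p (htP hp)).le)
  have hsc : t.sup' htne (fun p => dist p c / w p) = r := by
    apply le_antisymm
    · exact Finset.sup'_le _ _ (fun p hp => le_of_eq (hFval p (htFfin hp)))
    · obtain ⟨p, hp⟩ := htne
      calc r = dist p c / w p := (hFval p (htFfin hp)).symm
        _ ≤ _ := Finset.le_sup' (fun q => dist q c / w q) hp
  refine ⟨t, htP, hcard, ?_, ?_⟩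
  · intro y
    rw [hsupS c, hsupS y, hsc]
    obtain ⟨p, hp, hip⟩ := exists_obtuse htc y
    have hd : dist p c ≤ dist p y := dist_le_of_obtuse hip
    calc r = dist p c / w p := (hFval p (htFfin hp)).symm
      _ ≤ dist p y / w p := (div_le_div_iff_of_pos_right (hw p (htP hp))).mpr hd
      _ ≤ _ := Finset.le_sup' (fun q => dist q y / w q) hp
  · rw [hsupS c, hsc, hsupP c, hr]
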